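/- arXiv:2002.04422 — 6 statements merged into one kernel-verified Lean document; each statement's English description precedes it below -/
import Mathlib

section
/- The dimension difference dim O_{(n²,μ)} − dim O_μ (computed by the formula ½(v² − Σ μ̂_i² − ε(v − #odd parts))) is independent of the partition μ of v; it equals dim O_{(n²,1^v)} − dim O_{(1^v)}. -/
open Finset

/-- The orbit dimension formula `dim O_p = ½(m² − Σ_i p̂_i² − ε(m − #{j : p_j odd}))`
for a partition `p` of `m` (parts indexed in `range m`), where `p̂` is the conjugate
partition. -/
noncomputable def dimO (ε : ℤ) (m : ℕ) (p : ℕ → ℕ) : ℚ :=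
  ((m : ℚ) ^ 2
      - ∑ i ∈ Finset.range m, (((Finset.range m).filter (fun j => i + 1 ≤ p j)).card : ℚ) ^ 2
      - (ε : ℚ) * ((m : ℚ) - (((Finset.range m).filter (fun j => Odd (p j))).card : ℚ))) / 2

/-- Double counting: summing column counts of `μ` gives `∑ μ`. -/
lemma aux_double_count (v N : ℕ) (μ : ℕ → ℕ) (hN : ∀ j, j < v → μ j ≤ N) :
    ∑ i ∈ range N, ((range v).filter (fun j => i + 1 ≤ μ j)).card
      = ∑ j ∈ range v, μ j := by
  simp only [card_filter]
  rw [Finset.sum_comm]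
  refine Finset.sum_congr rfl fun j hj => ?_
  rw [← Finset.sum_subset (Finset.range_subset_range.mpr (hN j (mem_range.mp hj)))
      (fun i _ hi => by simp only [mem_range, not_lt] at hi; rw [if_neg (by omega)])]
  rw [Finset.sum_congr rfl fun i hi => if_pos (by have := mem_range.mp hi; omega)]
  simp

/-- Column count vanishes when `i` exceeds all parts. -/
lemma aux_col_zero (v i : ℕ) (μ : ℕ → ℕ) (h : ∀ j, j < v → μ j ≤ i) :
    ((range v).filter (fun j => i + 1 ≤ μ j)).card = 0 := by
  rw [Finset.card_eq_zero, Finset.filter_eq_empty_iff]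
  intro j hj
  have := h j (mem_range.mp hj)
  omega

/-- Column count of `(n,n,μ)`. -/
lemma aux_cardA (n v i : ℕ) (hn : 0 < n) (μ : ℕ → ℕ) (hsupp : ∀ j, v ≤ j → μ j = 0) :
    ((range (v + 2 * n)).filter
        (fun j => i + 1 ≤ (if j < 2 then n else μ (j - 2)))).card
      = (if i < n then 2 else 0) + ((range v).filter (fun j => i + 1 ≤ μ j)).card := by
  have hm : v + 2 * n = (v + 2 * (n - 1)) + 1 + 1 := by omega
  rw [hm]
  simp only [card_filter]
  rw [Finset.sum_range_succ', Finset.sum_range_succ']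
  have h0 : ∀ j ∈ range (v + 2 * (n - 1)),
      (if i + 1 ≤ (if j + 1 + 1 < 2 then n else μ (j + 1 + 1 - 2)) then 1 else 0)
        = (if i + 1 ≤ μ j then 1 else 0) := by
    intro j _
    have : ¬ (j + 1 + 1 < 2) := by omega
    rw [if_neg this]
    simp only [show j + 1 + 1 - 2 = j by omega]
  rw [Finset.sum_congr rfl h0]
  rw [← Finset.sum_subset (Finset.range_subset_range.mpr (show v ≤ v + 2 * (n - 1) by omega))
      (fun j _ hj => by
        simp only [mem_range, not_lt] at hj
        rw [hsupp j hj, if_neg (by omega)])]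
  simp only [show (0:ℕ) + 1 < 2 from by omega, show (0:ℕ) < 2 from by omega, if_true]
  split_ifs with h1 h2 h2 <;> omega

/-- Odd-part count of `(n,n,μ)`. -/
lemma aux_cardOdd (n v : ℕ) (hn : 0 < n) (μ : ℕ → ℕ) (hsupp : ∀ j, v ≤ j → μ j = 0) :
    ((range (v + 2 * n)).filter
        (fun j => Odd (if j < 2 then n else μ (j - 2)))).card
      = (if Odd n then 2 else 0) + ((range v).filter (fun j => Odd (μ j))).card := by
  have hm : v + 2 * n = (v + 2 * (n - 1)) + 1 + 1 := by omega
  rw [hm]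
  simp only [card_filter]
  rw [Finset.sum_range_succ', Finset.sum_range_succ']
  have h0 : ∀ j ∈ range (v + 2 * (n - 1)),
      (if Odd (if j + 1 + 1 < 2 then n else μ (j + 1 + 1 - 2)) then 1 else 0)
        = (if Odd (μ j) then 1 else 0) := by
    intro j _
    have : ¬ (j + 1 + 1 < 2) := by omega
    rw [if_neg this]
    simp only [show j + 1 + 1 - 2 = j by omega]
  rw [Finset.sum_congr rfl h0]
  rw [← Finset.sum_subset (Finset.range_subset_range.mpr (show v ≤ v + 2 * (n - 1) by omega))
      (fun j _ hj => by
        simp only [mem_range, not_lt] at hj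
        rw [hsupp j hj, if_neg (by simp [Nat.odd_iff])])]
  simp only [show (0:ℕ) + 1 < 2 from by omega, show (0:ℕ) < 2 from by omega, if_true]
  split_ifs with h1 <;> omega

/-- The square-sum of column counts of `(n,n,μ)` shifts by the constant `4v + 4n`. -/
lemma aux_sumSq (n v : ℕ) (hn : 0 < n) (μ : ℕ → ℕ)
    (hsum : ∑ i ∈ range v, μ i = v) (hsupp : ∀ j, v ≤ j → μ j = 0)
    (hparts : ∀ j, μ j ≤ n) :
    ∑ i ∈ range (v + 2 * n),
        (((range (v + 2 * n)).filter
            (fun j => i + 1 ≤ (if j < 2 then n else μ (j - 2)))).card : ℚ) ^ 2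
      = (∑ i ∈ range v, (((range v).filter (fun j => i + 1 ≤ μ j)).card : ℚ) ^ 2)
          + 4 * v + 4 * n := by
  have hμv : ∀ j, j < v → μ j ≤ v := fun j hj => hsum ▸
    Finset.single_le_sum (f := μ) (fun i _ => Nat.zero_le _) (mem_range.mpr hj)
  set b : ℕ → ℚ := fun i => (((range v).filter (fun j => i + 1 ≤ μ j)).card : ℚ) with hb
  have hcast : ∀ i ∈ range (v + 2 * n),
      (((range (v + 2 * n)).filter
          (fun j => i + 1 ≤ (if j < 2 then n else μ (j - 2)))).card : ℚ) ^ 2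
        = ((if i < n then (2:ℚ) else 0) + b i) ^ 2 := by
    intro i _
    rw [aux_cardA n v i hn μ hsupp]
    push_cast
    split_ifs <;> simp [hb, Nat.add_one_le_iff]
  rw [Finset.sum_congr rfl hcast]
  have hexp : ∀ i ∈ range (v + 2 * n),
      ((if i < n then (2:ℚ) else 0) + b i) ^ 2
        = (if i < n then (4:ℚ) else 0) + (4 * b i) + b i ^ 2 := by
    intro i _
    by_cases h : i < n
    · simp only [if_pos h]; ring
    · simp only [if_neg h]
      have : b i = 0 := by
        simp only [hb]
        rw [aux_col_zero v i μ (fun j _ => le_trans (hparts j) (by omega))]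
        norm_num
      rw [this]; ring
  rw [Finset.sum_congr rfl hexp, Finset.sum_add_distrib, Finset.sum_add_distrib]
  have h1 : ∑ i ∈ range (v + 2 * n), (if i < n then (4:ℚ) else 0) = 4 * n := by
    rw [← Finset.sum_subset (Finset.range_subset_range.mpr (show n ≤ v + 2 * n by omega))
        (fun i _ hi => if_neg (by simp only [mem_range, not_lt] at hi; omega))]
    rw [Finset.sum_congr rfl fun i hi => if_pos (mem_range.mp hi)]
    simp [mul_comm]
  have h2 : ∑ i ∈ range (v + 2 * n), 4 * b i = 4 * v := by
    rw [← Finset.mul_sum]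
    have : ∑ i ∈ range (v + 2 * n), b i = v := by
      simp only [hb]
      rw [← Nat.cast_sum]
      rw [aux_double_count v (v + 2 * n) μ (fun j _ => le_trans (hparts j) (by omega)), hsum]
    rw [this]
  have h3 : ∑ i ∈ range (v + 2 * n), b i ^ 2
      = ∑ i ∈ range v, (((range v).filter (fun j => i + 1 ≤ μ j)).card : ℚ) ^ 2 := by
    rw [← Finset.sum_subset (Finset.range_subset_range.mpr (show v ≤ v + 2 * n by omega))
        (fun i _ hi => by
          simp only [mem_range, not_lt] at hi
          simp only [hb]
          rw [aux_col_zero v i μ (fun j hj => le_trans (hμv j hj) hi)]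
          norm_num)]
  rw [h1, h2, h3]
  ring

/-- Key: the difference is an explicit constant not depending on `μ`. -/
lemma aux_key (n v : ℕ) (hn : 0 < n) (ε : ℤ) (μ : ℕ → ℕ)
    (hsum : ∑ i ∈ range v, μ i = v) (hsupp : ∀ j, v ≤ j → μ j = 0)
    (hparts : ∀ j, μ j ≤ n) :
    dimO ε (v + 2 * n) (fun i => if i < 2 then n else μ (i - 2)) - dimO ε v μ
      = (((v : ℚ) + 2 * n) ^ 2 - (v : ℚ) ^ 2 - (4 * v + 4 * n)
          - (ε : ℚ) * (2 * n - (if Odd n then 2 else 0))) / 2 := by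
  unfold dimO
  rw [aux_sumSq n v hn μ hsum hsupp hparts]
  have hodd := aux_cardOdd n v hn μ hsupp
  rw [hodd]
  push_cast
  split_ifs <;> ring

/-- The dimension difference `dim O_{(n²,μ)} − dim O_μ` is independent of the partition
`μ` of `v` (with parts ≤ n): it equals `dim O_{(n²,1^v)} − dim O_{(1^v)}`. -/
theorem dimO_diff_independent (n v : ℕ) (hn : 0 < n) (ε : ℤ) (hε : ε = 1 ∨ ε = -1)
    (μ : ℕ → ℕ) (hanti : Antitone μ) (hsum : ∑ i ∈ Finset.range v, μ i = v)
    (hsupp : ∀ i, v ≤ i → μ i = 0) (hparts : ∀ j, μ j ≤ n) :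
    dimO ε (v + 2 * n) (fun i => if i < 2 then n else μ (i - 2)) - dimO ε v μ
      = dimO ε (v + 2 * n) (fun i => if i < 2 then n else if i - 2 < v then 1 else 0)
        - dimO ε v (fun i => if i < v then 1 else 0) := by
  refine (aux_key n v hn ε μ hsum hsupp hparts).trans
    (aux_key n v hn ε (fun i => if i < v then 1 else 0) ?_ ?_ ?_).symm
  · rw [Finset.sum_congr rfl fun i hi => if_pos (mem_range.mp hi)]
    simp
  · intro j hj
    exact if_neg (by omega)
  · intro j
    split_ifs <;> omega
end

section
/- Let e, f, h be linear operators on the (d+1)-dimensional Q-vector space with basis w₀, …, w_d defined by e·w_i = (i+1)·w_{i+1} (with w_{d+1} := 0), f·w_i = 2(d−i+1)·w_{i−1} (with w_{−1} := 0), and h·w_i = (3i−2d)·w_i. Then these operators satisfy e²f − 2efe + fe² = −4e and f²e − 2fef + ef² = −4f, and [h,e] = 3e, [h,f] = −3f. -/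
open Matrix

/-- The operator `e` on `ℚ^{d+1}`: `e·w_i = (i+1)·w_{i+1}` (with `w_{d+1} := 0`). -/
def Emat (d : ℕ) : Matrix (Fin (d + 1)) (Fin (d + 1)) ℚ :=
  fun j i => if (j : ℕ) = (i : ℕ) + 1 then ((i : ℕ) + 1 : ℚ) else 0

/-- The operator `f` on `ℚ^{d+1}`: `f·w_i = 2(d−i+1)·w_{i−1}` (with `w_{−1} := 0`). -/
def Fmat (d : ℕ) : Matrix (Fin (d + 1)) (Fin (d + 1)) ℚ :=
  fun j i => if (j : ℕ) + 1 = (i : ℕ) then 2 * ((d : ℚ) - (i : ℕ) + 1) else 0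

/-- The operator `h` on `ℚ^{d+1}`: `h·w_i = (3i−2d)·w_i`. -/
def Hmat (d : ℕ) : Matrix (Fin (d + 1)) (Fin (d + 1)) ℚ :=
  fun j i => if j = i then 3 * ((i : ℕ) : ℚ) - 2 * (d : ℚ) else 0

lemma collapse {n : ℕ} (c : Fin n → Prop) [DecidablePred c] (f : Fin n → ℚ) (m : ℕ)
    (hc : ∀ k : Fin n, c k ↔ (k : ℕ) = m) :
    (∑ k : Fin n, if c k then f k else 0) = if h : m < n then f ⟨m, h⟩ else 0 := by
  split_ifs with h
  · rw [Finset.sum_eq_single (⟨m, h⟩ : Fin n)]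
    · simp [hc]
    · intro k _ hk
      rw [if_neg]
      rw [hc]
      intro he; exact hk (Fin.ext he)
    · simp
  · apply Finset.sum_eq_zero
    intro k _
    rw [if_neg]
    rw [hc]
    rintro rfl
    exact h k.isLt

lemma sum_coe_eq {n : ℕ} (m : ℕ) (f : Fin n → ℚ) :
    (∑ k : Fin n, if (k : ℕ) = m then f k else 0) = if h : m < n then f ⟨m, h⟩ else 0 :=
  collapse _ f m (fun _ => Iff.rfl)

lemma sum_eq_coe {n : ℕ} (m : ℕ) (f : Fin n → ℚ) :
    (∑ k : Fin n, if m = (k : ℕ) then f k else 0) = if h : m < n then f ⟨m, h⟩ else 0 :=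
  collapse _ f m (fun _ => by omega)

lemma sum_eq_succ {n : ℕ} (m : ℕ) (f : Fin n → ℚ) :
    (∑ k : Fin n, if m = (k : ℕ) + 1 then f k else 0)
      = if h : 1 ≤ m ∧ m ≤ n then f ⟨m - 1, by omega⟩ else 0 := by
  by_cases hm : 1 ≤ m ∧ m ≤ n
  · rw [collapse _ f (m - 1) (fun k => by omega)]
    have hlt : m - 1 < n := by omega
    simp [hm, hlt]
  · rw [collapse _ f n (fun k => by have := k.isLt; constructor <;> omega)]
    simp [hm]

lemma sum_succ_eq {n : ℕ} (m : ℕ) (f : Fin n → ℚ) :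
    (∑ k : Fin n, if (k : ℕ) + 1 = m then f k else 0)
      = if h : 1 ≤ m ∧ m ≤ n then f ⟨m - 1, by omega⟩ else 0 := by
  rw [← sum_eq_succ m f]
  apply Finset.sum_congr rfl
  intro k _
  congr 1
  simp [eq_comm]

/-- The operators `e, f, h` satisfy the nonhomogeneous Serre relations
`e²f − 2efe + fe² = −4e`, `f²e − 2fef + ef² = −4f`, and `[h,e] = 3e`, `[h,f] = −3f`. -/
theorem rank_one_relations (d : ℕ) :
    (Emat d * Emat d * Fmat d - (2 : ℚ) • (Emat d * Fmat d * Emat d)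
        + Fmat d * (Emat d * Emat d) = (-4 : ℚ) • Emat d) ∧
    (Fmat d * Fmat d * Emat d - (2 : ℚ) • (Fmat d * Emat d * Fmat d)
        + Emat d * (Fmat d * Fmat d) = (-4 : ℚ) • Fmat d) ∧
    (Hmat d * Emat d - Emat d * Hmat d = (3 : ℚ) • Emat d) ∧
    (Hmat d * Fmat d - Fmat d * Hmat d = (-3 : ℚ) • Fmat d) := by
  refine ⟨?_, ?_, ?_, ?_⟩ <;>
  · ext j i
    rcases j with ⟨j, hj⟩
    rcases i with ⟨i, hi⟩
    simp only [Matrix.mul_apply, Matrix.sub_apply, Matrix.add_apply, Matrix.smul_apply,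
      Emat, Fmat, Hmat, smul_eq_mul, ite_mul, mul_ite, mul_zero, zero_mul,
      Finset.sum_ite_eq, Finset.sum_ite_eq', Finset.mem_univ, if_true,
      Fin.mk.injEq, sum_coe_eq, sum_eq_coe, sum_eq_succ, sum_succ_eq, dite_mul, mul_dite,
      Finset.sum_dite_irrel, Finset.sum_const_zero]
    split_ifs <;>
      first
        | (exfalso; omega)
        | ((try (have hp1 : 1 ≤ i := by omega
                 obtain ⟨i, rfl⟩ : ∃ i', i = i' + 1 := ⟨i - 1, by omega⟩))
           (try simp only [Nat.add_sub_cancel, Nat.succ_sub_one] at *)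
           (try (have hp2 : 1 ≤ i := by omega
                 obtain ⟨i, rfl⟩ : ∃ i', i = i' + 1 := ⟨i - 1, by omega⟩))
           (try simp only [Nat.add_sub_cancel, Nat.succ_sub_one] at *)
           first
             | ((try push_cast); ring1)
             | (have hd : d = i := by omega
                subst hd; push_cast; ring1)
             | (have hd : d = i + 1 := by omega
                subst hd; push_cast; ring1)
             | (have hd : d = i + 2 := by omega
                subst hd; push_cast; ring1)
             | (have hd : d = i + 3 := by omega
                subst hd; push_cast; ring1)
             | (have hd : d = i + 4 := by omega
                subst hd; push_cast; ring1)
             | (have h0 : i = 0 := by omega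
                subst h0
                first
                  | ((try push_cast); ring1)
                  | (have hd : d = 0 := by omega
                     subst hd; (try push_cast); first | ring1 | norm_num)
                  | (have hd : d = 1 := by omega
                     subst hd; (try push_cast); first | ring1 | norm_num)
                  | (have hd : d = 2 := by omega
                     subst hd; (try push_cast); first | ring1 | norm_num)
                  | (have hd : d = 3 := by omega
                     subst hd; (try push_cast); first | ring1 | norm_num)
                  | (have hd : d = 4 := by omega
                     subst hd; (try push_cast); first | ring1 | norm_num)))
end

section
/- Define the polynomial P_{a,b,c}(y,D) = 2^{a+c} · ∏_{l=1}^{a}(D − (y − c + b − l)) · ∏_{k=1}^{b}(y − c + k) · ∏_{j=1}^{c}(D − (y − j)), for a,b,c ∈ ℕ with a ≤ b. If a finite family of distinct triples (a_i,b_i,c_i) with a_i ≤ b_i and a_i − b_i + c_i all equal to a fixed m, together with nonzero rational constants C_i, satisfies Σ_i C_i P_{a_i,b_i,c_i}(y,D) = 0 for all integers 0 ≤ y ≤ D and all sufficiently large D, then the family is empty. -/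
/-- The polynomial
`P_{a,b,c}(y,D) = 2^{a+c} ∏_{l=1}^{a}(D − (y−c+b−l)) ∏_{k=1}^{b}(y−c+k) ∏_{j=1}^{c}(D − (y−j))`
evaluated at natural numbers `y, D`. -/
def Ppoly (a b c y D : ℕ) : ℚ :=
  2 ^ (a + c)
    * (∏ l ∈ Finset.range a, ((D : ℚ) - ((y : ℚ) - (c : ℚ) + (b : ℚ) - ((l : ℚ) + 1))))
    * (∏ k ∈ Finset.range b, ((y : ℚ) - (c : ℚ) + ((k : ℚ) + 1)))
    * (∏ j ∈ Finset.range c, ((D : ℚ) - ((y : ℚ) - ((j : ℚ) + 1))))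

/-- Faithfulness: if a finite family of distinct triples `(aᵢ,bᵢ,cᵢ)` with `aᵢ ≤ bᵢ` and
`aᵢ − bᵢ + cᵢ = m`, with nonzero coefficients `Cᵢ`, satisfies
`Σᵢ Cᵢ P_{aᵢ,bᵢ,cᵢ}(y,D) = 0` for all `0 ≤ y ≤ D` and all sufficiently large `D`,
then the family is empty. -/
theorem Ppoly_linear_independence (ι : Type) (s : Finset ι)
    (a b c : ι → ℕ) (C : ι → ℚ) (m : ℤ)
    (hab : ∀ i ∈ s, a i ≤ b i)
    (hm : ∀ i ∈ s, (a i : ℤ) - (b i : ℤ) + (c i : ℤ) = m)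
    (hC : ∀ i ∈ s, C i ≠ 0)
    (hdist : ∀ i ∈ s, ∀ j ∈ s, (a i, b i, c i) = (a j, b j, c j) → i = j)
    (hvan : ∃ D₀ : ℕ, ∀ D : ℕ, D₀ ≤ D → ∀ y : ℕ, y ≤ D →
      ∑ i ∈ s, C i * Ppoly (a i) (b i) (c i) y D = 0) :
    s = ∅ := by
  by_contra hne
  obtain ⟨D₀, hvan⟩ := hvan
  have hs : s.Nonempty := Finset.nonempty_iff_ne_empty.mpr hne
  obtain ⟨iB, hiB, hmaxB⟩ := s.exists_max_image b hs
  set B := b iB with hB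
  obtain ⟨i₀, hi₀, hminc⟩ := (s.filter (fun i => b i = B)).exists_min_image c
    ⟨iB, by simp [hiB]; rfl⟩
  rw [Finset.mem_filter] at hi₀
  obtain ⟨hi₀s, hbi₀⟩ := hi₀
  set y := c i₀ with hy
  set N := a i₀ + c i₀ with hN
  -- polynomial in D
  set q : ι → Polynomial ℚ := fun i =>
    Polynomial.C (C i * 2 ^ (a i + c i)
        * ∏ k ∈ Finset.range (b i), ((y : ℚ) - (c i : ℚ) + ((k : ℚ) + 1)))
      * ((∏ l ∈ Finset.range (a i),
            (Polynomial.X - Polynomial.C ((y : ℚ) - (c i : ℚ) + (b i : ℚ) - ((l : ℚ) + 1))))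
        * (∏ j ∈ Finset.range (c i),
            (Polynomial.X - Polynomial.C ((y : ℚ) - ((j : ℚ) + 1))))) with hq
  have heval : ∀ i, ∀ D : ℕ, (q i).eval (D : ℚ) = C i * Ppoly (a i) (b i) (c i) y D := by
    intro i D
    simp only [hq, Ppoly, Polynomial.eval_mul, Polynomial.eval_C, Polynomial.eval_prod,
      Polynomial.eval_sub, Polynomial.eval_X]
    ring
  set g : Polynomial ℚ := ∑ i ∈ s, q i with hgdef
  have hg : ∀ D : ℕ, max D₀ y ≤ D → g.eval (D : ℚ) = 0 := by
    intro D hD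
    rw [hgdef, Polynomial.eval_finset_sum]
    simp only [heval]
    exact hvan D (le_trans (le_max_left _ _) hD) y (le_trans (le_max_right _ _) hD)
  have hg0 : g = 0 := by
    apply Polynomial.eq_zero_of_infinite_isRoot
    apply Set.infinite_of_injective_forall_mem
      (f := fun n : ℕ => ((n + max D₀ y : ℕ) : ℚ))
    · intro u v huv
      have : u + max D₀ y = v + max D₀ y := Nat.cast_injective huv
      omega
    · intro n
      exact hg (n + max D₀ y) (by omega)
  -- coefficients
  have hsum0 : ∑ i ∈ s, (q i).coeff N = 0 := by
    rw [← Polynomial.finset_sum_coeff, ← hgdef, hg0, Polynomial.coeff_zero]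
  -- monic part degree
  have hmonic : ∀ i, ((∏ l ∈ Finset.range (a i),
            (Polynomial.X - Polynomial.C ((y : ℚ) - (c i : ℚ) + (b i : ℚ) - ((l : ℚ) + 1))))
        * (∏ j ∈ Finset.range (c i),
            (Polynomial.X - Polynomial.C ((y : ℚ) - ((j : ℚ) + 1))))).Monic := by
    intro i
    exact (Polynomial.monic_prod_of_monic _ _ (fun l _ => Polynomial.monic_X_sub_C _)).mul
      (Polynomial.monic_prod_of_monic _ _ (fun j _ => Polynomial.monic_X_sub_C _))
  have hdeg : ∀ i, ((∏ l ∈ Finset.range (a i),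
            (Polynomial.X - Polynomial.C ((y : ℚ) - (c i : ℚ) + (b i : ℚ) - ((l : ℚ) + 1))))
        * (∏ j ∈ Finset.range (c i),
            (Polynomial.X - Polynomial.C ((y : ℚ) - ((j : ℚ) + 1))))).natDegree = a i + c i := by
    intro i
    rw [Polynomial.natDegree_mul (Polynomial.Monic.ne_zero (Polynomial.monic_prod_of_monic _ _
        (fun l _ => Polynomial.monic_X_sub_C _)))
      (Polynomial.Monic.ne_zero (Polynomial.monic_prod_of_monic _ _
        (fun j _ => Polynomial.monic_X_sub_C _))),
      Polynomial.natDegree_prod_of_monic _ _ (fun l _ => Polynomial.monic_X_sub_C _),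
      Polynomial.natDegree_prod_of_monic _ _ (fun j _ => Polynomial.monic_X_sub_C _)]
    simp only [Polynomial.natDegree_X_sub_C, Finset.sum_const, Finset.card_range,
      smul_eq_mul, mul_one]
  have key : ∀ i ∈ s, i ≠ i₀ → (q i).coeff N = 0 := by
    intro i his hne'
    by_cases hbi : b i = B
    · -- same degree, middle product vanishes
      have hci : c i ≠ c i₀ := by
        intro hcc
        apply hne'
        apply hdist i his i₀ hi₀s
        have h1 := hm i his
        have h2 := hm i₀ hi₀s
        have : a i = a i₀ := by omega
        rw [this, hbi, hbi₀, hcc]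
      have hclt : c i₀ < c i := by
        rcases lt_or_gt_of_ne hci with h | h
        · exact absurd (hminc i (Finset.mem_filter.mpr ⟨his, hbi⟩)) (not_le.mpr h)
        · exact h
      have hcub : c i ≤ c i₀ + B := by
        have h1 := hm i his
        have h2 := hm i₀ hi₀s
        have h3 := hab i₀ hi₀s
        omega
      have hk₀ : c i - c i₀ - 1 ∈ Finset.range (b i) := by
        rw [Finset.mem_range]; omega
      have hzero : (∏ k ∈ Finset.range (b i), ((y : ℚ) - (c i : ℚ) + ((k : ℚ) + 1))) = 0 := by
        apply Finset.prod_eq_zero hk₀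
        have hcast : ((c i - c i₀ - 1 : ℕ) : ℚ) = (c i : ℚ) - (c i₀ : ℚ) - 1 := by
          have h : ((c i - c i₀ - 1 : ℕ) : ℤ) = (c i : ℤ) - (c i₀ : ℤ) - 1 := by omega
          exact_mod_cast congrArg (fun z : ℤ => (z : ℚ)) h
        rw [hy, hcast]; ring
      rw [hq]
      simp only [Polynomial.coeff_C_mul]
      rw [hzero]; ring
    · -- lower degree
      have hlt : a i + c i < N := by
        have h1 := hm i his
        have h2 := hm i₀ hi₀s
        have h3 := hmaxB i his
        rw [hN]; omega
      rw [hq]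
      simp only [Polynomial.coeff_C_mul]
      rw [Polynomial.coeff_eq_zero_of_natDegree_lt (by rw [hdeg i]; exact hlt)]
      ring
  have hmain : (q i₀).coeff N = C i₀ * 2 ^ N *
      ∏ k ∈ Finset.range B, ((y : ℚ) - (c i₀ : ℚ) + ((k : ℚ) + 1)) := by
    have h1 : (((∏ l ∈ Finset.range (a i₀),
            (Polynomial.X - Polynomial.C ((y : ℚ) - (c i₀ : ℚ) + (b i₀ : ℚ) - ((l : ℚ) + 1))))
        * (∏ j ∈ Finset.range (c i₀),
            (Polynomial.X - Polynomial.C ((y : ℚ) - ((j : ℚ) + 1)))))).coeff N = 1 := by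
      rw [show N = (((∏ l ∈ Finset.range (a i₀),
            (Polynomial.X - Polynomial.C ((y : ℚ) - (c i₀ : ℚ) + (b i₀ : ℚ) - ((l : ℚ) + 1))))
        * (∏ j ∈ Finset.range (c i₀),
            (Polynomial.X - Polynomial.C ((y : ℚ) - ((j : ℚ) + 1)))))).natDegree from
        by rw [hdeg i₀, hN]]
      exact Polynomial.Monic.coeff_natDegree (hmonic i₀)
    rw [hq]
    simp only [Polynomial.coeff_C_mul]
    rw [h1]
    simp only [hN, hbi₀]
    ring
  have hprodne : (∏ k ∈ Finset.range B, ((y : ℚ) - (c i₀ : ℚ) + ((k : ℚ) + 1))) ≠ 0 := by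
    apply Finset.prod_ne_zero_iff.mpr
    intro k _
    rw [hy]
    have : (k : ℚ) + 1 > 0 := by positivity
    intro h
    simp at h
    linarith
  have := Finset.sum_eq_single_of_mem i₀ hi₀s key
  rw [hsum0, hmain] at this
  have h2N : (2 : ℚ) ^ N ≠ 0 := by positivity
  exact hC i₀ hi₀s (by
    rcases mul_eq_zero.mp this.symm with h | h
    · rcases mul_eq_zero.mp h with h' | h'
      · exact h'
      · exact absurd h' h2N
    · exact absurd h hprodne)
end

section
/- Let t be a linear operator on a Q-vector space satisfying the identity (1/(n!)) eⁿ fⁿ |_top = (t+d)(t+d−2)⋯(t+d−2(n−1)) for all n, where e, f, t arise from the sl₂-type action e·w_i = (i+1)w_{i+1}, f·w_i = 2(d−i+1)w_{i−1} on Q^{d+1} with t = ef − h, h·w_i = (3i−2d)w_i. Then t satisfies the polynomial identity (t − d)(t − d + 2)⋯(t + d − 2)(t + d) = 0 on the subspace spanned by w_d, and more generally the operator (ef − h) on span(w_d) satisfies ∏_{k=0}^{d} ((ef − h) + d − 2k) = 0. -/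
open Matrix Polynomial

lemma eig (d : ℕ) :
    (Emat d * Fmat d - Hmat d).mulVec (Pi.single (Fin.last d) (1 : ℚ)) =
      (d : ℚ) • (Pi.single (Fin.last d) (1 : ℚ) : Fin (d+1) → ℚ) := by
  funext j
  have hEF : (Emat d * Fmat d) j (Fin.last d) = if j = Fin.last d then 2 * d else 0 := by
    rw [Matrix.mul_apply]
    rcases d with _ | n
    · simp [Emat, Fmat]
    · rw [Finset.sum_eq_single (⟨n, by omega⟩ : Fin (n + 2))]
      · simp [Emat, Fmat, Fin.last, Fin.ext_iff]
        split <;> ring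
      · intro m _ hm
        have hne : (m : ℕ) ≠ n := fun h => hm (Fin.ext h)
        have h2 : (m : ℕ) + 1 ≠ n + 1 := by omega
        simp [Fmat, Fin.last, h2, hne]
      · simp
  simp only [Matrix.mulVec_single, Matrix.sub_apply, hEF, Hmat, Pi.smul_apply,
    Pi.single_apply]
  split <;> simp_all [Fin.last, Hmat] <;> ring

/-- The operator `t = ef − h` satisfies `(t−d)(t−d+2)⋯(t+d−2)(t+d) = 0` on the subspace
spanned by `w_d`, i.e. `∏_{k=0}^{d} (t + d − 2k)` annihilates `span(w_d)`. -/
theorem t_polynomial_identity (d : ℕ) :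
    ∀ x ∈ Submodule.span ℚ {Pi.single (Fin.last d) (1 : ℚ)},
      (Polynomial.aeval (Emat d * Fmat d - Hmat d)
          (∏ k ∈ Finset.range (d + 1),
            (Polynomial.X + Polynomial.C ((d : ℚ) - 2 * (k : ℚ))))).mulVec x = 0 := by
  intro x hx
  rw [Submodule.mem_span_singleton] at hx
  obtain ⟨c, rfl⟩ := hx
  rw [Matrix.mulVec_smul]
  rw [Finset.prod_range_succ, _root_.map_mul]
  rw [← Matrix.mulVec_mulVec]
  have : (Polynomial.aeval (Emat d * Fmat d - Hmat d)
      (Polynomial.X + Polynomial.C ((d : ℚ) - 2 * (d : ℚ)))).mulVec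
      (Pi.single (Fin.last d) (1 : ℚ)) = 0 := by
    rw [map_add, aeval_X, aeval_C, Matrix.add_mulVec, eig]
    have : (algebraMap ℚ (Matrix (Fin (d+1)) (Fin (d+1)) ℚ) ((d : ℚ) - 2 * d)).mulVec
        (Pi.single (Fin.last d) (1 : ℚ)) = ((d : ℚ) - 2 * d) • (Pi.single (Fin.last d) (1 : ℚ) : Fin (d+1) → ℚ) := by
      rw [Algebra.algebraMap_eq_smul_one, Matrix.smul_mulVec, Matrix.one_mulVec]
    rw [this, ← add_smul]
    have h0 : (d : ℚ) + ((d : ℚ) - 2 * d) = 0 := by ring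
    rw [h0, zero_smul]
  rw [this, Matrix.mulVec_zero, smul_zero]
end

section
/- Define a relation ⪯ on the set Θ of n×n centrosymmetric matrices with ℕ entries by A ⪯ B iff Σ_{r≤i, s≥j} a_{rs} ≤ Σ_{r≤i, s≥j} b_{rs} for all i < j, and the refinement A ⊑ B iff A ⪯ B, ro(A) = ro(B), and co(A) = co(B). Then ⊑ is a partial order on Θ (reflexive, transitive, and antisymmetric). -/
open Matrix

/-- The set `Θ` of `n×n` centrosymmetric matrices with `ℕ` entries. -/
def Theta (n : ℕ) := {A : Matrix (Fin n) (Fin n) ℕ // ∀ i j, A i j = A i.rev j.rev}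

/-- The partial sum `Σ_{r ≤ i, s ≥ j} a_{rs}`. -/
def psum {n : ℕ} (A : Matrix (Fin n) (Fin n) ℕ) (i j : Fin n) : ℕ :=
  ∑ r ∈ Finset.univ.filter (fun r => r ≤ i), ∑ s ∈ Finset.univ.filter (fun s => j ≤ s), A r s

/-- `A ⪯ B` iff all partial sums `Σ_{r≤i, s≥j}` with `i < j` of `A` are at most those of `B`. -/
def Preceq {n : ℕ} (A B : Theta n) : Prop :=
  ∀ i j : Fin n, i < j → psum A.1 i j ≤ psum B.1 i j

/-- The refinement `A ⊑ B`: `A ⪯ B` with equal row sums and equal column sums. -/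
def Sqsubseteq {n : ℕ} (A B : Theta n) : Prop :=
  Preceq A B ∧ (∀ i, ∑ j, A.1 i j = ∑ j, B.1 i j) ∧ (∀ j, ∑ i, A.1 i j = ∑ i, B.1 i j)

lemma aux_prefix {n : ℕ} (G H : Fin n → ℕ) (m : Fin n)
    (h : ∀ t, t < m → ∑ u ∈ Finset.Iic t, G u = ∑ u ∈ Finset.Iic t, H u) :
    ∀ t, t < m → G t = H t := by
  have key : ∀ k : ℕ, ∀ t : Fin n, t.1 < k → t < m → G t = H t := by
    intro k
    induction k with
    | zero => intro t ht _; omega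
    | succ k ih =>
      intro t htk ht
      have h1 : ∑ u ∈ Finset.Iio t, G u = ∑ u ∈ Finset.Iio t, H u :=
        Finset.sum_congr rfl fun u hu => by
          have hu' : u < t := Finset.mem_Iio.mp hu
          exact ih u (by have := Fin.lt_def.mp hu'; omega) (lt_trans hu' ht)
      have h2 := h t ht
      have e : ∀ F : Fin n → ℕ, ∑ u ∈ Finset.Iic t, F u = F t + ∑ u ∈ Finset.Iio t, F u := by
        intro F
        rw [← Finset.Iio_insert, Finset.sum_insert (by simp)]
      rw [e G, e H, h1] at h2
      omega
  intro t ht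
  exact key (t.1 + 1) t (Nat.lt_succ_self _) ht

lemma rev_sum {n : ℕ} (F : Fin n → ℕ) (j : Fin n) :
    ∑ s ∈ Finset.univ.filter (fun s => j ≤ s), F s = ∑ u ∈ Finset.Iic j.rev, F u.rev := by
  apply Finset.sum_nbij' (fun s => Fin.rev s) (fun u => Fin.rev u) <;>
    simp [Fin.rev_le_rev, Fin.le_rev_iff, Fin.rev_le_iff]

lemma psum_as_Iic {n : ℕ} (A : Matrix (Fin n) (Fin n) ℕ) (i j : Fin n) :
    psum A i j = ∑ r ∈ Finset.Iic i, ∑ s ∈ Finset.univ.filter (fun s => j ≤ s), A r s := by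
  unfold psum
  congr 1
  ext; simp

lemma offdiag_eq {n : ℕ} (A B : Matrix (Fin n) (Fin n) ℕ)
    (hpsum : ∀ i j : Fin n, i < j → psum A i j = psum B i j) :
    ∀ i j : Fin n, i < j → A i j = B i j := by
  -- step 1: tail sums agree
  have step1 : ∀ i j : Fin n, i < j →
      ∑ s ∈ Finset.univ.filter (fun s => j ≤ s), A i s
        = ∑ s ∈ Finset.univ.filter (fun s => j ≤ s), B i s := by
    intro i j hij
    refine aux_prefix (fun r => ∑ s ∈ Finset.univ.filter (fun s => j ≤ s), A r s)
      (fun r => ∑ s ∈ Finset.univ.filter (fun s => j ≤ s), B r s) j ?_ i hij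
    intro t ht
    have := hpsum t j ht
    rwa [psum_as_Iic, psum_as_Iic] at this
  -- step 2: individual entries
  intro i j hij
  have key : ∀ u : Fin n, u < i.rev → A i u.rev = B i u.rev := by
    refine aux_prefix (fun u => A i u.rev) (fun u => B i u.rev) i.rev ?_
    intro t ht
    have hit : i < t.rev := by
      have := Fin.rev_lt_rev.mpr ht
      rwa [Fin.rev_rev] at this
    have := step1 i t.rev hit
    rw [rev_sum (A i) t.rev, rev_sum (B i) t.rev, Fin.rev_rev] at this
    exact this
  have := key j.rev (by rwa [Fin.rev_lt_rev])
  rwa [Fin.rev_rev] at this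

lemma theta_ext {n : ℕ} (A B : Theta n)
    (hpsum : ∀ i j : Fin n, i < j → psum A.1 i j = psum B.1 i j)
    (hrow : ∀ i, ∑ j, A.1 i j = ∑ j, B.1 i j) : A = B := by
  have hoff := offdiag_eq A.1 B.1 hpsum
  have hoff' : ∀ i j : Fin n, i ≠ j → A.1 i j = B.1 i j := by
    intro i j hne
    rcases lt_or_gt_of_ne hne with h | h
    · exact hoff i j h
    · have h' : i.rev < j.rev := Fin.rev_lt_rev.mpr h
      rw [A.2 i j, B.2 i j]
      exact hoff i.rev j.rev h'
  apply Subtype.ext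
  ext i j
  rcases eq_or_ne i j with rfl | hne
  · have e : ∀ M : Matrix (Fin n) (Fin n) ℕ,
        ∑ k, M i k = M i i + ∑ k ∈ Finset.univ.erase i, M i k := by
      intro M
      rw [Finset.add_sum_erase _ _ (Finset.mem_univ i)]
    have h1 : ∑ k ∈ Finset.univ.erase i, A.1 i k = ∑ k ∈ Finset.univ.erase i, B.1 i k :=
      Finset.sum_congr rfl fun k hk => hoff' i k (Ne.symm (Finset.mem_erase.mp hk).1)
    have h2 := hrow i
    rw [e A.1, e B.1, h1] at h2
    omega
  · exact hoff' i j hne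

/-- `⊑` is a partial order on `Θ`: reflexive, transitive and antisymmetric. -/
theorem sqsubseteq_partial_order (n : ℕ) :
    (∀ A : Theta n, Sqsubseteq A A) ∧
    (∀ A B C : Theta n, Sqsubseteq A B → Sqsubseteq B C → Sqsubseteq A C) ∧
    (∀ A B : Theta n, Sqsubseteq A B → Sqsubseteq B A → A = B) := by
  refine ⟨fun A => ⟨fun i j _ => le_rfl, fun i => rfl, fun j => rfl⟩, ?_, ?_⟩
  · rintro A B C ⟨h1, h2, h3⟩ ⟨h4, h5, h6⟩
    exact ⟨fun i j hij => le_trans (h1 i j hij) (h4 i j hij),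
      fun i => (h2 i).trans (h5 i), fun j => (h3 j).trans (h6 j)⟩
  · rintro A B ⟨h1, h2, _⟩ ⟨h4, _, _⟩
    exact theta_ext A B (fun i j hij => le_antisymm (h1 i j hij) (h4 i j hij)) h2
end

section
/- Let n = 2r+1 be odd and θ(i) = n−i. In U(sl_n), with e_{i,θ} = e_i + f_{θ(i)}, the nonhomogeneous Serre relation holds for the middle pair: e_{r,θ}² e_{r+1,θ} − 2 e_{r,θ} e_{r+1,θ} e_{r,θ} + e_{r+1,θ} e_{r,θ}² = −4 e_{r,θ} (note θ(r) = r+1, so c_{r,r+1} = −1 and r = θ(r+1)). -/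
/-- The Cartan matrix of type `A_{n-1}`: `c_{ij} = 2δ_{ij} − δ_{i,j+1} − δ_{i,j−1}`. -/
def cartan (i j : ℕ) : ℤ :=
  2 * (if i = j then 1 else 0) - (if i = j + 1 then 1 else 0) - (if j = i + 1 then 1 else 0)

/-- In `U(sl_n)` for `n = 2r+1` odd, with `e_{i,θ} = e_i + f_{n−i}`, the nonhomogeneous
Serre relation holds for the middle pair:
`e_{r,θ}² e_{r+1,θ} − 2 e_{r,θ} e_{r+1,θ} e_{r,θ} + e_{r+1,θ} e_{r,θ}² = −4 e_{r,θ}`. -/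
theorem middle_nonhomogeneous_serre (n r : ℕ) (hr : n = 2 * r + 1) (hr1 : 1 ≤ r)
    (R : Type) [Ring R] [Algebra ℚ R] (e f h : ℕ → R)
    (hhh : ∀ i j, 1 ≤ i → i ≤ n - 1 → 1 ≤ j → j ≤ n - 1 → h i * h j = h j * h i)
    (hhe : ∀ i j, 1 ≤ i → i ≤ n - 1 → 1 ≤ j → j ≤ n - 1 →
      h i * e j - e j * h i = ((cartan i j : ℚ)) • e j)
    (hhf : ∀ i j, 1 ≤ i → i ≤ n - 1 → 1 ≤ j → j ≤ n - 1 →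
      h i * f j - f j * h i = (-(cartan i j : ℚ)) • f j)
    (hef : ∀ i j, 1 ≤ i → i ≤ n - 1 → 1 ≤ j → j ≤ n - 1 →
      e i * f j - f j * e i = if i = j then h i else 0)
    (hee0 : ∀ i j, 1 ≤ i → i ≤ n - 1 → 1 ≤ j → j ≤ n - 1 → cartan i j = 0 →
      e i * e j = e j * e i)
    (hff0 : ∀ i j, 1 ≤ i → i ≤ n - 1 → 1 ≤ j → j ≤ n - 1 → cartan i j = 0 →
      f i * f j = f j * f i)
    (hserre_e : ∀ i j, 1 ≤ i → i ≤ n - 1 → 1 ≤ j → j ≤ n - 1 → cartan i j = -1 →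
      e i * e i * e j - 2 * (e i * e j * e i) + e j * (e i * e i) = 0)
    (hserre_f : ∀ i j, 1 ≤ i → i ≤ n - 1 → 1 ≤ j → j ≤ n - 1 → cartan i j = -1 →
      f i * f i * f j - 2 * (f i * f j * f i) + f j * (f i * f i) = 0) :
    (e r + f (r + 1)) * (e r + f (r + 1)) * (e (r + 1) + f r)
      - 2 * ((e r + f (r + 1)) * (e (r + 1) + f r) * (e r + f (r + 1)))
      + (e (r + 1) + f r) * ((e r + f (r + 1)) * (e r + f (r + 1)))
      = -(4 * (e r + f (r + 1))) := by
  have h1r : 1 ≤ r := hr1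
  have hrn : r ≤ n - 1 := by omega
  have h1r1 : 1 ≤ r + 1 := by omega
  have hr1n : r + 1 ≤ n - 1 := by omega
  have crr : cartan r r = 2 := by simp [cartan]
  have crs : cartan r (r + 1) = -1 := by simp [cartan]; omega
  have csr : cartan (r + 1) r = -1 := by simp [cartan]; omega
  have css : cartan (r + 1) (r + 1) = 2 := by simp [cartan]
  have F1 := hserre_e r (r + 1) h1r hrn h1r1 hr1n crs
  have F2 := hserre_f (r + 1) r h1r1 hr1n h1r hrn csr
  have F3 : e r * f (r + 1) - f (r + 1) * e r = 0 := by
    have := hef r (r + 1) h1r hrn h1r1 hr1n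
    rwa [if_neg (by omega)] at this
  have F5 : e r * f r - f r * e r = h r := by
    have := hef r r h1r hrn h1r hrn
    rwa [if_pos rfl] at this
  have F6 : e (r + 1) * f (r + 1) - f (r + 1) * e (r + 1) = h (r + 1) := by
    have := hef (r + 1) (r + 1) h1r1 hr1n h1r1 hr1n
    rwa [if_pos rfl] at this
  have F7 : h r * e r - e r * h r = e r + e r := by
    have := hhe r r h1r hrn h1r hrn
    rw [crr] at this; rw [this]; push_cast; rw [two_smul]
  have F8 : h (r + 1) * e r - e r * h (r + 1) = -(e r) := by
    have := hhe (r + 1) r h1r1 hr1n h1r hrn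
    rw [csr] at this; rw [this]; push_cast; rw [neg_smul, one_smul]
  have F9 : h r * f (r + 1) - f (r + 1) * h r = f (r + 1) := by
    have := hhf r (r + 1) h1r hrn h1r1 hr1n
    rw [crs] at this; rw [this]; push_cast; rw [neg_neg, one_smul]
  have F10 : h (r + 1) * f (r + 1) - f (r + 1) * h (r + 1) = -(f (r + 1) + f (r + 1)) := by
    have := hhf (r + 1) (r + 1) h1r1 hr1n h1r1 hr1n
    rw [css] at this; rw [this]; push_cast; rw [neg_smul, two_smul]
  linear_combination (norm := noncomm_ring)
    F1 + F2 - F3 * e (r + 1) + e (r + 1) * F3 + F6 * e r - e r * F6 + F8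
      + F3 * f r + f (r + 1) * F5 - F5 * f (r + 1) - f r * F3 - F9
      - F7 + F8 - F9 + F10
      + (e r + f (r + 1)) * (F5 - F6) - (F5 - F6) * (e r + f (r + 1))
end
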